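/- arXiv:0906.4321 — 2 statements merged into one kernel-verified Lean document; each statement's English description precedes it below -/
import Mathlib

section
/- (Soundness of Modus Ponens for weak validity) If Φ is countably infinite and both φ ⇒ ψ and φ are valid sentences in the class of all extended awareness structures over Φ, then ψ is valid in that class. -/
namespace AwarenessPaper

/-- Formulas of the language `ℒ^{∀,K,X,A}_n(Φ,𝒳)` with `Φ = ℕ` (countably infinite
set of primitive propositions) and variables indexed by `ℕ`; agents indexed by `ℕ`. -/
inductive Fm : Type
  | prop : ℕ → Fm
  | var  : ℕ → Fm
  | neg  : Fm → Fm
  | and  : Fm → Fm → Fm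
  | k    : ℕ → Fm → Fm
  | a    : ℕ → Fm → Fm
  | x    : ℕ → Fm → Fm
  | all  : ℕ → Fm → Fm

namespace Fm

/-- Primitive propositions occurring in a formula. -/
def props : Fm → Set ℕ
  | .prop p => {p}
  | .var _ => ∅
  | .neg φ => props φ
  | .and φ ψ => props φ ∪ props ψ
  | .k _ φ => props φ
  | .a _ φ => props φ
  | .x _ φ => props φ
  | .all _ φ => props φ

/-- Free variables of a formula. -/
def free : Fm → Set ℕ
  | .prop _ => ∅
  | .var v => {v}
  | .neg φ => free φ
  | .and φ ψ => free φ ∪ free ψ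
  | .k _ φ => free φ
  | .a _ φ => free φ
  | .x _ φ => free φ
  | .all v φ => free φ \ {v}

/-- All variables occurring in a formula (free or bound). -/
def vars : Fm → Set ℕ
  | .prop _ => ∅
  | .var v => {v}
  | .neg φ => vars φ
  | .and φ ψ => vars φ ∪ vars ψ
  | .k _ φ => vars φ
  | .a _ φ => vars φ
  | .x _ φ => vars φ
  | .all v φ => insert v (vars φ)

/-- Quantifier nesting depth; a formula is quantifier-free iff `qcount φ = 0`. -/
def qcount : Fm → ℕ
  | .prop _ => 0
  | .var _ => 0
  | .neg φ => qcount φ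
  | .and φ ψ => max (qcount φ) (qcount ψ)
  | .k _ φ => qcount φ
  | .a _ φ => qcount φ
  | .x _ φ => qcount φ
  | .all _ φ => qcount φ + 1

/-- `substV v ψ φ` is `φ[x_v/ψ]`: replace free occurrences of variable `v` by `ψ`. -/
def substV (v : ℕ) (ψ : Fm) : Fm → Fm
  | .prop p => .prop p
  | .var u => if u = v then ψ else .var u
  | .neg φ => .neg (substV v ψ φ)
  | .and φ₁ φ₂ => .and (substV v ψ φ₁) (substV v ψ φ₂)
  | .k i φ => .k i (substV v ψ φ)
  | .a i φ => .a i (substV v ψ φ)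
  | .x i φ => .x i (substV v ψ φ)
  | .all u φ => if u = v then .all u φ else .all u (substV v ψ φ)

/-- `substP q ψ φ` is `φ[q/ψ]`: replace the primitive proposition `q` by `ψ`. -/
def substP (q : ℕ) (ψ : Fm) : Fm → Fm
  | .prop p => if p = q then ψ else .prop p
  | .var u => .var u
  | .neg φ => .neg (substP q ψ φ)
  | .and φ₁ φ₂ => .and (substP q ψ φ₁) (substP q ψ φ₂)
  | .k i φ => .k i (substP q ψ φ)
  | .a i φ => .a i (substP q ψ φ)
  | .x i φ => .x i (substP q ψ φ)
  | .all u φ => .all u (substP q ψ φ)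

/-- Rename primitive propositions along `τ`. -/
def rename (τ : ℕ → ℕ) : Fm → Fm
  | .prop p => .prop (τ p)
  | .var u => .var u
  | .neg φ => .neg (rename τ φ)
  | .and φ₁ φ₂ => .and (rename τ φ₁) (rename τ φ₂)
  | .k i φ => .k i (rename τ φ)
  | .a i φ => .a i (rename τ φ)
  | .x i φ => .x i (rename τ φ)
  | .all u φ => .all u (rename τ φ)

def or (φ ψ : Fm) : Fm := .neg (.and (.neg φ) (.neg ψ))
def imp (φ ψ : Fm) : Fm := Fm.or (.neg φ) ψ
def iff (φ ψ : Fm) : Fm := .and (imp φ ψ) (imp ψ φ)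
/-- `A_i^* φ`, an abbreviation for `K_i (φ ∨ ¬φ)`. -/
def astar (i : ℕ) (φ : Fm) : Fm := .k i (Fm.or φ (.neg φ))

end Fm

/-- An extended awareness structure for agents `ℕ` over `Φ = ℕ`, with set of worlds `W`:
each world has a nonempty local language `L s`, a valuation, possibility relations `R i`,
and awareness sets `Aw i s` consisting of formulas over the local language. -/
structure EAS (W : Type) where
  L : W → Set ℕ
  L_ne : ∀ s, (L s).Nonempty
  val : W → ℕ → Bool
  R : ℕ → W → W → Prop
  Aw : ℕ → W → Set Fm
  Aw_lang : ∀ i s, ∀ φ ∈ Aw i s, Fm.props φ ⊆ L s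

namespace EAS

variable {W : Type}

/-- One level of the truth definition; `univ` interprets the bodies of quantifiers
(at one lower quantifier depth).  A formula is true at `s` only if its primitive
propositions all belong to the local language `L s`. -/
def satAux (M : EAS W) (univ : W → Fm → Prop) : W → Fm → Prop
  | s, .prop p => p ∈ M.L s ∧ M.val s p = true
  | _, .var _ => False
  | s, .neg φ => Fm.props φ ⊆ M.L s ∧ ¬ satAux M univ s φ
  | s, .and φ ψ => satAux M univ s φ ∧ satAux M univ s ψ
  | s, .k i φ => Fm.props φ ⊆ M.L s ∧ ∀ t, M.R i s t → satAux M univ t φ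
  | s, .a i φ => φ ∈ M.Aw i s
  | s, .x i φ => (Fm.props φ ⊆ M.L s ∧ ∀ t, M.R i s t → satAux M univ t φ) ∧ φ ∈ M.Aw i s
  | s, .all v φ => Fm.props φ ⊆ M.L s ∧
      ∀ β : Fm, Fm.qcount β = 0 → Fm.free β = ∅ → Fm.props β ⊆ M.L s →
        univ s (Fm.substV v β φ)

/-- Truth with quantifier-depth budget `n`. -/
def satN (M : EAS W) : ℕ → W → Fm → Prop
  | 0 => M.satAux fun _ _ => False
  | n + 1 => M.satAux (M.satN n)

/-- `(M,s) ⊨ φ`. Quantifiers range over quantifier-free sentences of the local language. -/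
def sat (M : EAS W) (s : W) (φ : Fm) : Prop := M.satN (Fm.qcount φ) s φ

/-- Awareness is generated by primitive propositions. -/
def agpp (M : EAS W) : Prop :=
  ∀ i s (φ : Fm), φ ∈ M.Aw i s ↔ ∀ p ∈ Fm.props φ, Fm.prop p ∈ M.Aw i s

/-- Agents know what they are aware of. -/
def ka (M : EAS W) : Prop := ∀ i s t, M.R i s t → M.Aw i s = M.Aw i t

end EAS

/-- (Weak) validity in the class `𝒩_n(Φ,𝒳)` of all extended awareness structures
satisfying agpp and ka: truth at every world whose local language contains all the
primitive propositions of the formula. -/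
def Valid (φ : Fm) : Prop :=
  ∀ (W : Type) (M : EAS W), M.agpp → M.ka → ∀ s : W, Fm.props φ ⊆ M.L s → M.sat s φ


section Aux

namespace Fm

lemma props_finite : ∀ χ : Fm, χ.props.Finite
  | .prop p => Set.finite_singleton p
  | .var _ => Set.finite_empty
  | .neg χ => props_finite χ
  | .and χ₁ χ₂ => (props_finite χ₁).union (props_finite χ₂)
  | .k _ χ => props_finite χ
  | .a _ χ => props_finite χ
  | .x _ χ => props_finite χ
  | .all _ χ => props_finite χ

lemma props_rename (τ : ℕ → ℕ) : ∀ χ : Fm, (χ.rename τ).props = τ '' χ.props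
  | .prop p => by simp [rename, props]
  | .var _ => by simp [rename, props]
  | .neg χ => by simp [rename, props, props_rename τ χ]
  | .and χ₁ χ₂ => by
      simp [rename, props, props_rename τ χ₁, props_rename τ χ₂, Set.image_union]
  | .k _ χ => by simp [rename, props, props_rename τ χ]
  | .a _ χ => by simp [rename, props, props_rename τ χ]
  | .x _ χ => by simp [rename, props, props_rename τ χ]
  | .all _ χ => by simp [rename, props, props_rename τ χ]

lemma qcount_rename (τ : ℕ → ℕ) : ∀ χ : Fm, (χ.rename τ).qcount = χ.qcount
  | .prop _ => rfl
  | .var _ => rfl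
  | .neg χ => qcount_rename τ χ
  | .and χ₁ χ₂ => by
      simp [rename, qcount, qcount_rename τ χ₁, qcount_rename τ χ₂]
  | .k _ χ => qcount_rename τ χ
  | .a _ χ => qcount_rename τ χ
  | .x _ χ => qcount_rename τ χ
  | .all _ χ => by simp [rename, qcount, qcount_rename τ χ]

lemma free_rename (τ : ℕ → ℕ) : ∀ χ : Fm, (χ.rename τ).free = χ.free
  | .prop _ => rfl
  | .var _ => rfl
  | .neg χ => free_rename τ χ
  | .and χ₁ χ₂ => by simp [rename, free, free_rename τ χ₁, free_rename τ χ₂]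
  | .k _ χ => free_rename τ χ
  | .a _ χ => free_rename τ χ
  | .x _ χ => free_rename τ χ
  | .all _ χ => by simp [rename, free, free_rename τ χ]

lemma rename_substV (τ : ℕ → ℕ) (v : ℕ) (β : Fm) :
    ∀ χ : Fm, (substV v β χ).rename τ = substV v (β.rename τ) (χ.rename τ)
  | .prop _ => rfl
  | .var u => by
      by_cases h : u = v <;> simp [substV, rename, h]
  | .neg χ => by simp [substV, rename, rename_substV τ v β χ]
  | .and χ₁ χ₂ => by
      simp [substV, rename, rename_substV τ v β χ₁, rename_substV τ v β χ₂]
  | .k _ χ => by simp [substV, rename, rename_substV τ v β χ]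
  | .a _ χ => by simp [substV, rename, rename_substV τ v β χ]
  | .x _ χ => by simp [substV, rename, rename_substV τ v β χ]
  | .all u χ => by
      by_cases h : u = v <;> simp [substV, rename, h, rename_substV τ v β χ]

lemma rename_rename_of_rightInverse {σ τ : ℕ → ℕ}
    (h : Function.RightInverse σ τ) : ∀ χ : Fm, (χ.rename σ).rename τ = χ
  | .prop p => by simp [rename, h p]
  | .var _ => rfl
  | .neg χ => by simp [rename, rename_rename_of_rightInverse h χ]
  | .and χ₁ χ₂ => by
      simp [rename, rename_rename_of_rightInverse h χ₁,
        rename_rename_of_rightInverse h χ₂]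
  | .k _ χ => by simp [rename, rename_rename_of_rightInverse h χ]
  | .a _ χ => by simp [rename, rename_rename_of_rightInverse h χ]
  | .x _ χ => by simp [rename, rename_rename_of_rightInverse h χ]
  | .all _ χ => by simp [rename, rename_rename_of_rightInverse h χ]

lemma rename_eq_self {τ : ℕ → ℕ} :
    ∀ χ : Fm, (∀ p ∈ χ.props, τ p = p) → χ.rename τ = χ
  | .prop p, h => by simp [rename, h p (by simp [props])]
  | .var _, _ => rfl
  | .neg χ, h => by simp [rename, rename_eq_self χ h]
  | .and χ₁ χ₂, h => by
      simp only [props, Set.mem_union] at h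
      simp [rename, rename_eq_self χ₁ fun p hp => h p (Or.inl hp),
        rename_eq_self χ₂ fun p hp => h p (Or.inr hp)]
  | .k _ χ, h => by simp [rename, rename_eq_self χ h]
  | .a _ χ, h => by simp [rename, rename_eq_self χ h]
  | .x _ χ, h => by simp [rename, rename_eq_self χ h]
  | .all _ χ, h => by simp [rename, rename_eq_self χ h]

lemma qcount_substV (v : ℕ) (β : Fm) (hβ : β.qcount = 0) :
    ∀ χ : Fm, (substV v β χ).qcount = χ.qcount
  | .prop _ => rfl
  | .var u => by by_cases h : u = v <;> simp [substV, qcount, h, hβ]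
  | .neg χ => qcount_substV v β hβ χ
  | .and χ₁ χ₂ => by
      simp [substV, qcount, qcount_substV v β hβ χ₁, qcount_substV v β hβ χ₂]
  | .k _ χ => qcount_substV v β hβ χ
  | .a _ χ => qcount_substV v β hβ χ
  | .x _ χ => qcount_substV v β hβ χ
  | .all u χ => by
      by_cases h : u = v <;> simp [substV, qcount, h, qcount_substV v β hβ χ]

lemma props_imp (φ ψ : Fm) : (imp φ ψ).props = φ.props ∪ ψ.props := by
  simp [imp, or, props]

lemma qcount_imp (φ ψ : Fm) : (imp φ ψ).qcount = max φ.qcount ψ.qcount := by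
  simp [imp, or, qcount]

end Fm

namespace EAS

variable {W : Type}

lemma satAux_ext (M : EAS W) (u₁ u₂ : W → Fm → Prop) (k : ℕ)
    (H : ∀ t χ, Fm.qcount χ < k → (u₁ t χ ↔ u₂ t χ)) :
    ∀ χ : Fm, χ.qcount ≤ k → ∀ t, (M.satAux u₁ t χ ↔ M.satAux u₂ t χ) := by
  intro χ
  induction χ with
  | prop p => intro _ t; exact Iff.rfl
  | var v => intro _ t; exact Iff.rfl
  | neg χ ih => intro hq t; simp only [satAux, Fm.qcount] at *; rw [ih hq t]
  | and χ₁ χ₂ ih₁ ih₂ =>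
      intro hq t
      simp only [Fm.qcount, max_le_iff] at hq
      simp only [satAux]; rw [ih₁ hq.1 t, ih₂ hq.2 t]
  | k i χ ih =>
      intro hq t
      simp only [satAux]
      exact and_congr_right fun _ => forall₂_congr fun t' _ => ih hq t'
  | a i χ ih => intro _ t; exact Iff.rfl
  | x i χ ih =>
      intro hq t
      simp only [satAux]
      exact and_congr_left fun _ =>
        and_congr_right fun _ => forall₂_congr fun t' _ => ih hq t'
  | all v χ ih =>
      intro hq t
      simp only [Fm.qcount] at hq
      simp only [satAux]
      refine and_congr_right fun _ => forall_congr' fun β => ?_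
      refine imp_congr_right fun hβ => imp_congr_right fun _ => imp_congr_right fun _ => ?_
      exact H t _ (by rw [Fm.qcount_substV v β hβ χ]; omega)

lemma satN_of_le (M : EAS W) :
    ∀ (k n : ℕ), k ≤ n → ∀ χ : Fm, χ.qcount ≤ k → ∀ t,
      (M.satN n t χ ↔ M.satN k t χ) := by
  intro k
  induction k with
  | zero =>
      intro n _ χ hχ t
      cases n with
      | zero => exact Iff.rfl
      | succ m =>
          exact M.satAux_ext (M.satN m) (fun _ _ => False) 0
            (fun _ _ h => absurd h (by omega)) χ hχ t
  | succ k ih =>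
      intro n hn χ hχ t
      cases n with
      | zero => omega
      | succ m =>
          exact M.satAux_ext (M.satN m) (M.satN k) (k + 1)
            (fun t' χ' h => ih m (by omega) χ' (by omega) t') χ hχ t

/-- Pull back an extended awareness structure along a surjective renaming of
primitive propositions. -/
def pull (M : EAS W) (τ : ℕ → ℕ) (hτ : Function.Surjective τ) : EAS W where
  L t := τ ⁻¹' (M.L t)
  L_ne t := by
    obtain ⟨p, hp⟩ := M.L_ne t
    obtain ⟨r, hr⟩ := hτ p
    exact ⟨r, by simp [Set.mem_preimage, hr, hp]⟩
  val t r := M.val t (τ r)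
  R := M.R
  Aw i t := {χ | Fm.rename τ χ ∈ M.Aw i t}
  Aw_lang := by
    intro i t χ hχ p hp
    have h := M.Aw_lang i t _ hχ
    rw [Fm.props_rename] at h
    exact h ⟨p, hp, rfl⟩

lemma pull_agpp (M : EAS W) (τ : ℕ → ℕ) (hτ : Function.Surjective τ)
    (h : M.agpp) : (M.pull τ hτ).agpp := by
  intro i t χ
  show Fm.rename τ χ ∈ M.Aw i t ↔ _
  rw [h i t]
  rw [Fm.props_rename]
  constructor
  · intro H p hp
    exact H (τ p) ⟨p, hp, rfl⟩
  · rintro H p ⟨q, hq, rfl⟩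
    exact H q hq

lemma pull_ka (M : EAS W) (τ : ℕ → ℕ) (hτ : Function.Surjective τ)
    (h : M.ka) : (M.pull τ hτ).ka := by
  intro i s t hst
  show {χ | _ ∈ M.Aw i s} = {χ | _ ∈ M.Aw i t}
  rw [h i s t hst]

lemma pull_satAux (M : EAS W) (τ : ℕ → ℕ) (hτ : Function.Surjective τ)
    (u₁ u₂ : W → Fm → Prop) (hu : ∀ t χ, u₁ t χ ↔ u₂ t (χ.rename τ)) :
    ∀ (χ : Fm) (t : W),
      (M.pull τ hτ).satAux u₁ t χ ↔ M.satAux u₂ t (χ.rename τ) := by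
  have hL : ∀ (t : W) (χ : Fm),
      χ.props ⊆ (M.pull τ hτ).L t ↔ (χ.rename τ).props ⊆ M.L t := by
    intro t χ
    rw [Fm.props_rename, Set.image_subset_iff]
    exact Iff.rfl
  intro χ
  induction χ with
  | prop p => intro t; exact Iff.rfl
  | var v => intro t; exact Iff.rfl
  | neg χ ih =>
      intro t
      simp only [Fm.rename, satAux]
      rw [hL t χ, ih t]
  | and χ₁ χ₂ ih₁ ih₂ =>
      intro t
      simp only [Fm.rename, satAux]
      rw [ih₁ t, ih₂ t]
  | k i χ ih =>
      intro t
      simp only [Fm.rename, satAux]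
      rw [hL t χ]
      exact and_congr_right fun _ => forall₂_congr fun t' _ => ih t'
  | a i χ ih => intro t; exact Iff.rfl
  | x i χ ih =>
      intro t
      simp only [Fm.rename, satAux]
      rw [hL t χ]
      refine and_congr_left fun _ => and_congr_right fun _ => ?_
      exact forall₂_congr fun t' _ => ih t'
  | all v χ ih =>
      intro t
      simp only [Fm.rename, satAux]
      rw [hL t χ]
      refine and_congr_right fun _ => ?_
      constructor
      · intro H β' hq' hf' hp'
        set σ := Function.surjInv hτ with hσdef
        have hσ : Function.RightInverse σ τ := Function.rightInverse_surjInv hτ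
        have h1 : (β'.rename σ).qcount = 0 := by rw [Fm.qcount_rename]; exact hq'
        have h2 : (β'.rename σ).free = ∅ := by rw [Fm.free_rename]; exact hf'
        have h3 : (β'.rename σ).props ⊆ (M.pull τ hτ).L t := by
          rw [Fm.props_rename]
          rintro p ⟨q, hq, rfl⟩
          show τ (σ q) ∈ M.L t
          rw [hσ q]
          exact hp' hq
        have := (hu t _).mp (H _ h1 h2 h3)
        rwa [Fm.rename_substV, Fm.rename_rename_of_rightInverse hσ] at this
      · intro H β hq hf hp
        have h1 : (β.rename τ).qcount = 0 := by rw [Fm.qcount_rename]; exact hq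
        have h2 : (β.rename τ).free = ∅ := by rw [Fm.free_rename]; exact hf
        have h3 : (β.rename τ).props ⊆ M.L t := by
          rw [Fm.props_rename, Set.image_subset_iff]; exact hp
        have := H _ h1 h2 h3
        rw [← Fm.rename_substV] at this
        exact (hu t _).mpr this

lemma pull_satN (M : EAS W) (τ : ℕ → ℕ) (hτ : Function.Surjective τ) :
    ∀ (n : ℕ) (t : W) (χ : Fm),
      (M.pull τ hτ).satN n t χ ↔ M.satN n t (χ.rename τ) := by
  intro n
  induction n with
  | zero =>
      intro t χ
      exact M.pull_satAux τ hτ (fun _ _ => False) (fun _ _ => False)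
        (fun _ _ => Iff.rfl) χ t
  | succ m ih =>
      intro t χ
      exact M.pull_satAux τ hτ ((M.pull τ hτ).satN m) (M.satN m)
        (fun t' χ' => ih t' χ') χ t

lemma satAux_mp (M : EAS W) (u : W → Fm → Prop) (s : W) {φ ψ : Fm}
    (hi : M.satAux u s (Fm.imp φ ψ)) (hf : M.satAux u s φ)
    (hψL : ψ.props ⊆ M.L s) : M.satAux u s ψ := by
  simp only [Fm.imp, Fm.or, satAux] at hi
  obtain ⟨hL, hni⟩ := hi
  by_contra hns
  apply hni
  constructor
  · exact ⟨fun p hp => hL (Or.inl hp), fun h => h.2 hf⟩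
  · exact ⟨hψL, hns⟩

lemma satN_mp (M : EAS W) (n : ℕ) (s : W) {φ ψ : Fm}
    (hi : M.satN n s (Fm.imp φ ψ)) (hf : M.satN n s φ)
    (hψL : ψ.props ⊆ M.L s) : M.satN n s ψ := by
  cases n with
  | zero => exact M.satAux_mp _ s hi hf hψL
  | succ m => exact M.satAux_mp _ s hi hf hψL

end EAS

end Aux

/-- Soundness of modus ponens for weak validity. -/
theorem stmt6 (φ ψ : Fm) (hφs : Fm.free φ = ∅) (hψs : Fm.free ψ = ∅)
    (himp : Valid (Fm.imp φ ψ)) (hφ : Valid φ) :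
    Valid ψ := by
  intro W M hagpp hka s hψL
  classical
  obtain ⟨p₀, hp₀⟩ := M.L_ne s
  set F : Set ℕ := φ.props ∪ ψ.props with hFdef
  have hF : F.Finite := (Fm.props_finite φ).union (Fm.props_finite ψ)
  have hFc : (Fᶜ : Set ℕ).Infinite := hF.infinite_compl
  have hψc : ((ψ.props)ᶜ : Set ℕ).Infinite := (Fm.props_finite ψ).infinite_compl
  haveI : Infinite ↥(Fᶜ : Set ℕ) := hFc.to_subtype
  haveI : Infinite ↥((ψ.props)ᶜ : Set ℕ) := hψc.to_subtype
  haveI : Denumerable ↥(Fᶜ : Set ℕ) := Nat.Subtype.denumerable _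
  haveI : Denumerable ↥((ψ.props)ᶜ : Set ℕ) := Nat.Subtype.denumerable _
  let e : ↥(Fᶜ : Set ℕ) ≃ ↥((ψ.props)ᶜ : Set ℕ) :=
    (Denumerable.eqv _).trans (Denumerable.eqv _).symm
  let τ : ℕ → ℕ := fun n =>
    if hn : n ∈ F then (if n ∈ ψ.props then n else p₀)
    else ((e ⟨n, hn⟩ : ↥((ψ.props)ᶜ : Set ℕ)) : ℕ)
  have hτψ : ∀ p ∈ ψ.props, τ p = p := by
    intro p hp
    have hpF : p ∈ F := Or.inr hp
    simp only [τ, dif_pos hpF, if_pos hp]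
  have hτφ : ∀ p ∈ φ.props, τ p ∈ M.L s := by
    intro p hp
    have hpF : p ∈ F := Or.inl hp
    simp only [τ, dif_pos hpF]
    by_cases h : p ∈ ψ.props
    · rw [if_pos h]; exact hψL h
    · rw [if_neg h]; exact hp₀
  have hτ : Function.Surjective τ := by
    intro m
    by_cases hm : m ∈ ψ.props
    · exact ⟨m, hτψ m hm⟩
    · refine ⟨((e.symm ⟨m, hm⟩ : ↥(Fᶜ : Set ℕ)) : ℕ), ?_⟩
      have h1 : ((e.symm ⟨m, hm⟩ : ↥(Fᶜ : Set ℕ)) : ℕ) ∉ F :=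
        (e.symm ⟨m, hm⟩).2
      simp only [τ, dif_neg h1, Subtype.coe_eta, Equiv.apply_symm_apply]
  set M' : EAS W := M.pull τ hτ with hM'
  have hLimp : (Fm.imp φ ψ).props ⊆ M'.L s := by
    rw [Fm.props_imp]
    rintro p (hp | hp)
    · exact hτφ p hp
    · show τ p ∈ M.L s
      rw [hτψ p hp]
      exact hψL hp
  have hLφ : φ.props ⊆ M'.L s := fun p hp => hτφ p hp
  have hLψ : ψ.props ⊆ M'.L s := by
    intro p hp
    show τ p ∈ M.L s
    rw [hτψ p hp]
    exact hψL hp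
  have h1 : M'.sat s (Fm.imp φ ψ) :=
    himp W M' (M.pull_agpp τ hτ hagpp) (M.pull_ka τ hτ hka) s hLimp
  have h2 : M'.sat s φ :=
    hφ W M' (M.pull_agpp τ hτ hagpp) (M.pull_ka τ hτ hka) s hLφ
  set N : ℕ := (Fm.imp φ ψ).qcount with hN
  have hqφ : φ.qcount ≤ N := by rw [hN, Fm.qcount_imp]; exact le_max_left _ _
  have hqψ : ψ.qcount ≤ N := by rw [hN, Fm.qcount_imp]; exact le_max_right _ _
  have h2' : M'.satN N s φ :=
    (M'.satN_of_le φ.qcount N hqφ φ le_rfl s).mpr h2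
  have h1' : M'.satN N s (Fm.imp φ ψ) := h1
  have hψN : M'.satN N s ψ := M'.satN_mp N s h1' h2' hLψ
  have hψq : M'.satN ψ.qcount s ψ :=
    (M'.satN_of_le ψ.qcount N hqψ ψ le_rfl s).mp hψN
  have := (M.pull_satN τ hτ ψ.qcount s ψ).mp hψq
  rwa [Fm.rename_eq_self ψ hτψ] at this

end AwarenessPaper
end

section
/- (Soundness of Barcan*_X) The sentence (A_i(∀x φ) ∧ ∀x (A_i x ⇒ X_i φ)) ⇒ X_i(∀x A_i x ⇒ ∀x φ) is valid in the class of extended awareness structures satisfying agpp and ka. -/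
namespace AwarenessPaper

namespace Fm

lemma props_subset_substV (v : ℕ) (β : Fm) : ∀ φ : Fm, φ.props ⊆ (Fm.substV v β φ).props := by
  intro φ
  induction φ with
  | prop p => simp [substV, props]
  | var u => simp [substV, props]
  | neg φ ih => simpa [substV, props] using ih
  | and φ ψ ih1 ih2 =>
      simpa [substV, props] using Set.union_subset_union ih1 ih2
  | k j φ ih => simpa [substV, props] using ih
  | a j φ ih => simpa [substV, props] using ih
  | x j φ ih => simpa [substV, props] using ih
  | all u φ ih =>
      by_cases h : u = v
      · simp [substV, props, h]
      · simpa [substV, props, h] using ih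

lemma substV_props_subset (v : ℕ) (β : Fm) :
    ∀ φ : Fm, (Fm.substV v β φ).props ⊆ φ.props ∪ β.props := by
  intro φ
  induction φ with
  | prop p => simp [substV, props]
  | var u =>
      by_cases h : u = v <;> simp [substV, props, h]
  | neg φ ih => simpa [substV, props] using ih
  | and φ ψ ih1 ih2 =>
      simp only [substV, props]
      intro p hp
      rcases hp with hp | hp
      · rcases ih1 hp with h | h
        · exact Or.inl (Or.inl h)
        · exact Or.inr h
      · rcases ih2 hp with h | h
        · exact Or.inl (Or.inr h)
        · exact Or.inr h
  | k j φ ih => simpa [substV, props] using ih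
  | a j φ ih => simpa [substV, props] using ih
  | x j φ ih => simpa [substV, props] using ih
  | all u φ ih =>
      by_cases h : u = v
      · simp [substV, props, h]
      · simpa [substV, props, h] using ih

end Fm

namespace EAS

variable {W : Type} {M : EAS W}

lemma satAux_props {u : W → Fm → Prop} :
    ∀ {φ : Fm} {s : W}, M.satAux u s φ → φ.props ⊆ M.L s := by
  intro φ
  induction φ with
  | prop p => intro s h; simpa [Fm.props] using h.1
  | var v => intro s h; exact absurd h (by simp [satAux])
  | neg φ ih => intro s h; exact h.1
  | and φ ψ ih1 ih2 =>
      intro s h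
      exact Set.union_subset (ih1 h.1) (ih2 h.2)
  | k j φ ih => intro s h; exact h.1
  | a j φ ih => intro s h; exact M.Aw_lang j s φ h
  | x j φ ih => intro s h; exact h.1.1
  | all v φ ih => intro s h; exact h.1

lemma satAux_imp {u : W → Fm → Prop} {s : W} {α β : Fm}
    (hα : α.props ⊆ M.L s) (hβ : β.props ⊆ M.L s) :
    M.satAux u s (Fm.imp α β) ↔ (M.satAux u s α → M.satAux u s β) := by
  have hαβ : α.props ∪ β.props ⊆ M.L s := Set.union_subset hα hβ
  show (α.props ∪ β.props ⊆ M.L s ∧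
      ¬((α.props ⊆ M.L s ∧ ¬(α.props ⊆ M.L s ∧ ¬ M.satAux u s α)) ∧
        (β.props ⊆ M.L s ∧ ¬ M.satAux u s β))) ↔ _
  constructor
  · rintro ⟨-, h⟩ hA
    by_contra hB
    exact h ⟨⟨hα, fun h' => h'.2 hA⟩, hβ, hB⟩
  · intro h
    refine ⟨hαβ, ?_⟩
    rintro ⟨⟨-, h1⟩, -, hB⟩
    by_cases hA : M.satAux u s α
    · exact hB (h hA)
    · exact h1 ⟨hα, hA⟩

end EAS

/-- Soundness of Barcan*_X:
`(A_i(∀x φ) ∧ ∀x (A_i x ⇒ X_i φ)) ⇒ X_i(∀x A_i x ⇒ ∀x φ)` is valid in the class of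
extended awareness structures satisfying agpp and ka. -/
theorem stmt8 (i : ℕ) (x : ℕ) (φ : Fm) :
    Valid (Fm.imp
      (Fm.and (.a i (.all x φ)) (.all x (Fm.imp (.a i (.var x)) (.x i φ))))
      (.x i (Fm.imp (.all x (.a i (.var x))) (.all x φ)))) := by
  classical
  intro W M hagpp hka s hL
  set P : Fm := .a i (.all x φ) with hP
  set Q₀ : Fm := Fm.imp (.a i (.var x)) (.x i φ) with hQ0
  set Q : Fm := .all x Q₀ with hQ
  set E : Fm := .all x (.a i (.var x)) with hE
  set F : Fm := .all x φ with hF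
  set D : Fm := Fm.imp E F with hD
  set C : Fm := .x i D with hC
  have hφL : φ.props ⊆ M.L s := by
    intro p hp
    apply hL
    simp [Fm.imp, Fm.or, Fm.props, hP, hQ, hQ0, hC, hD, hE, hF]
    tauto
  set n := φ.qcount with hn
  have hq : (Fm.imp (Fm.and P Q) C).qcount = n + 1 := by
    simp [Fm.imp, Fm.or, Fm.qcount, hP, hQ, hQ0, hC, hD, hE, hF, hn]
  show M.satN ((Fm.imp (Fm.and P Q) C).qcount) s _
  rw [hq]
  show M.satAux (M.satN n) s _
  obtain ⟨U, hU⟩ : ∃ U, M.satN n = M.satAux U := by cases n <;> exact ⟨_, rfl⟩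
  have hPQL : (Fm.and P Q).props ⊆ M.L s := by
    intro p hp
    apply hφL
    simpa [Fm.imp, Fm.or, Fm.props, hP, hQ, hQ0, hF] using hp
  have hCL : C.props ⊆ M.L s := by
    intro p hp
    apply hφL
    simpa [Fm.imp, Fm.or, Fm.props, hC, hD, hE, hF] using hp
  rw [EAS.satAux_imp hPQL hCL]
  rintro ⟨H1, H2⟩
  have hAwφ : ∀ p ∈ φ.props, Fm.prop p ∈ M.Aw i s := by
    have h := (hagpp i s (.all x φ)).1 H1
    simpa [Fm.props] using h
  have key : ∀ β : Fm, β.qcount = 0 → β.free = ∅ → β.props ⊆ M.L s → β ∈ M.Aw i s →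
      (Fm.substV x β φ).props ⊆ M.L s ∧ ∀ t, M.R i s t → M.satAux U t (Fm.substV x β φ) := by
    intro β hq0 hf hp hAw
    have h2 := H2.2 β hq0 hf hp
    rw [hU] at h2
    have hsub : Fm.substV x β Q₀ = Fm.imp (.a i β) (.x i (Fm.substV x β φ)) := by
      simp [Fm.imp, Fm.or, Fm.substV, hQ0]
    rw [hsub] at h2
    have hβL : (Fm.a i β).props ⊆ M.L s := by simpa [Fm.props] using hp
    have hφβL : (Fm.x i (Fm.substV x β φ)).props ⊆ M.L s := by
      intro p hpp
      rcases Fm.substV_props_subset x β φ (by simpa [Fm.props] using hpp) with h | h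
      · exact hφL h
      · exact hp h
    rw [EAS.satAux_imp hβL hφβL] at h2
    have h3 := h2 hAw
    exact ⟨h3.1.1, h3.1.2⟩
  have hφLt : ∀ t, M.R i s t → φ.props ⊆ M.L t := by
    intro t ht p hp
    have hpAw : Fm.prop p ∈ M.Aw i s := hAwφ p hp
    have hk := (key (.prop p) (by simp [Fm.qcount]) (by simp [Fm.free])
      (by simpa [Fm.props] using hφL hp) hpAw).2 t ht
    exact EAS.satAux_props hk (Fm.props_subset_substV x (.prop p) φ hp)
  have hDprops : ∀ p, p ∈ D.props → p ∈ φ.props := by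
    intro p hp
    simpa [Fm.imp, Fm.or, Fm.props, hD, hE, hF] using hp
  refine ⟨⟨?_, ?_⟩, ?_⟩
  · exact fun p hp => hφL (hDprops p hp)
  · intro t ht
    have hEL : E.props ⊆ M.L t := by simp [Fm.props, hE]
    have hFL : F.props ⊆ M.L t := by simpa [Fm.props, hF] using hφLt t ht
    rw [EAS.satAux_imp hEL hFL]
    intro hEt
    refine ⟨hφLt t ht, ?_⟩
    intro β hq0 hf hp
    have hb := hEt.2 β hq0 hf hp
    rw [hU] at hb
    simp only [Fm.substV, if_pos rfl] at hb
    have hbt : β ∈ M.Aw i t := hb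
    have hbs : β ∈ M.Aw i s := by rw [hka i s t ht]; exact hbt
    have hβLs : β.props ⊆ M.L s := M.Aw_lang i s β hbs
    have hres := (key β hq0 hf hβLs hbs).2 t ht
    rw [hU]
    exact hres
  · refine (hagpp i s D).2 ?_
    intro p hp
    exact hAwφ p (hDprops p hp)


end AwarenessPaper
end
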